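/- Let α, β, γ be positive integers with gcd(α, β) = 1 and α dividing γ. Write γ = γ₁γ₂ where every prime dividing γ₁ divides α and gcd(γ₂, α) = 1. Then for every y in [1, γ/α], gcd(αy + β, γ) divides γ₂, and conversely for every divisor d of γ₂ there exists y in [1, γ/α] with gcd(αy + β, γ) = d. -/

import Mathlib

/-- For `gcd(α,β)=1`, `α ∣ γ`, `γ = γ₁γ₂` with `rad(γ₁) ∣ α`, `gcd(γ₂,α)=1`:
`gcd(αy+β, γ)` always divides `γ₂`, and every divisor of `γ₂` is attained
for some `y ∈ [1, γ/α]`. -/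
theorem gcd_affine_values (α β γ γ₁ γ₂ : ℕ) (hα : 0 < α) (hβ : 0 < β) (hγ : 0 < γ)
    (hcop : Nat.Coprime α β) (hdvd : α ∣ γ) (hsplit : γ = γ₁ * γ₂)
    (hrad : ∀ p : ℕ, p.Prime → p ∣ γ₁ → p ∣ α) (hcop2 : Nat.Coprime γ₂ α) :
    (∀ y ∈ Set.Icc 1 (γ / α), Nat.gcd (α * y + β) γ ∣ γ₂) ∧
    (∀ d : ℕ, d ∣ γ₂ → ∃ y ∈ Set.Icc 1 (γ / α), Nat.gcd (α * y + β) γ = d) := by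
  have hγ₁pos : 0 < γ₁ := by
    rcases Nat.eq_zero_or_pos γ₁ with h | h
    · simp [hsplit, h] at hγ
    · exact h
  have hγ₂pos : 0 < γ₂ := by
    rcases Nat.eq_zero_or_pos γ₂ with h | h
    · simp [hsplit, h] at hγ
    · exact h
  -- key fact: gcd (α*y+β) γ divides γ₂ for all y
  have key1 : ∀ y : ℕ, Nat.gcd (α * y + β) γ ∣ γ₂ := by
    intro y
    set g := Nat.gcd (α * y + β) γ with hg
    have hgl : g ∣ α * y + β := Nat.gcd_dvd_left _ _
    have hgr : g ∣ γ := Nat.gcd_dvd_right _ _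
    have hcop3 : Nat.Coprime (α * y + β) α := by
      have h1 : Nat.gcd (α * y + β) α = Nat.gcd β α := by
        conv_lhs => rw [Nat.add_comm, Nat.mul_comm]
        rw [Nat.gcd_add_mul_right_left]
      unfold Nat.Coprime
      rw [h1]; exact hcop.symm
    have hgα : Nat.Coprime g α := Nat.Coprime.coprime_dvd_left hgl hcop3
    have hgγ₁ : Nat.Coprime g γ₁ := by
      by_contra h
      obtain ⟨p, hp, hpd⟩ := Nat.exists_prime_and_dvd h
      have hp1 : p ∣ g := hpd.trans (Nat.gcd_dvd_left _ _)
      have hp2 : p ∣ γ₁ := hpd.trans (Nat.gcd_dvd_right _ _)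
      have hpα : p ∣ α := hrad p hp hp2
      have : p ∣ Nat.gcd g α := Nat.dvd_gcd hp1 hpα
      rw [hgα] at this
      exact hp.one_lt.ne' (Nat.eq_one_of_dvd_one this)
    have : g ∣ γ₁ * γ₂ := hsplit ▸ hgr
    exact (Nat.Coprime.dvd_of_dvd_mul_left hgγ₁ this)
  have hαγ₁ : α ∣ γ₁ := by
    have : α ∣ γ₁ * γ₂ := hsplit ▸ hdvd
    exact Nat.Coprime.dvd_of_dvd_mul_right hcop2.symm this
  obtain ⟨t, ht⟩ := hαγ₁
  have htpos : 0 < t := by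
    rcases Nat.eq_zero_or_pos t with h | h
    · simp [h] at ht; omega
    · exact h
  have hdivα : γ / α = t * γ₂ := by
    rw [hsplit, ht]
    rw [Nat.mul_assoc, Nat.mul_div_cancel_left _ hα]
  have hγ₂le : γ₂ ≤ γ / α := by
    rw [hdivα]; exact Nat.le_mul_of_pos_left _ htpos
  refine ⟨fun y _ => key1 y, fun d hd => ?_⟩
  haveI : NeZero γ₂ := ⟨hγ₂pos.ne'⟩
  -- solve α * y + β ≡ d  (mod γ₂)
  set u := (ZMod.unitOfCoprime α hcop2.symm : (ZMod γ₂)ˣ) with hu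
  set x : ZMod γ₂ := (↑u⁻¹ : ZMod γ₂) * ((d : ZMod γ₂) - (β : ZMod γ₂)) with hx
  set v := x.val with hv
  set y := if v = 0 then γ₂ else v with hy
  have hycast : (y : ZMod γ₂) = x := by
    by_cases h : v = 0
    · simp only [hy, h, if_true]
      rw [ZMod.natCast_self]
      have hxv : ((v : ℕ) : ZMod γ₂) = x := ZMod.natCast_rightInverse x
      rw [← hxv, h]; simp
    · simp only [hy, h, if_false, hv]
      rw [if_neg (show ¬ x.val = 0 from h)]; exact ZMod.natCast_rightInverse x
  have hxval : (α : ZMod γ₂) * x = (d : ZMod γ₂) - (β : ZMod γ₂) := by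
    have hαu : (α : ZMod γ₂) = (u : ZMod γ₂) := by simp [hu]
    rw [hx, hαu, ← mul_assoc]
    simp
  have hmod : ((α * y + β : ℕ) : ZMod γ₂) = ((d : ℕ) : ZMod γ₂) := by
    push_cast
    rw [hycast, hxval]
    ring
  have hmodeq : (α * y + β) ≡ d [MOD γ₂] := (ZMod.natCast_eq_natCast_iff _ _ _).mp hmod
  have hgcd2 : Nat.gcd (α * y + β) γ₂ = d := by
    have h1 : Nat.gcd (α * y + β) γ₂ = Nat.gcd d γ₂ := by
      rw [Nat.gcd_comm (α * y + β) γ₂, Nat.gcd_comm d γ₂, Nat.gcd_rec, Nat.gcd_rec γ₂ d]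
      rw [hmodeq]
    rw [h1, Nat.gcd_eq_left hd]
  refine ⟨y, ⟨?_, ?_⟩, ?_⟩
  · by_cases h : v = 0 <;> simp [hy, h] <;> omega
  · have hvlt : v < γ₂ := ZMod.val_lt x
    have : y ≤ γ₂ := by by_cases h : v = 0 <;> simp [hy, h] <;> omega
    omega
  · have hg2 : Nat.gcd (α * y + β) γ ∣ γ₂ := key1 y
    have hgd : Nat.gcd (α * y + β) γ ∣ d := by
      rw [← hgcd2]
      exact Nat.dvd_gcd (Nat.gcd_dvd_left _ _) hg2
    have hdg : d ∣ Nat.gcd (α * y + β) γ := by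
      refine Nat.dvd_gcd ?_ ?_
      · rw [← hgcd2]; exact Nat.gcd_dvd_left _ _
      · exact hd.trans (hsplit ▸ Dvd.intro_left γ₁ rfl)
    exact Nat.dvd_antisymm hgd hdg
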